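/- For each integer N ≥ 3, let A(N) be the number of equivalence classes of pairs (n,k) with 3 ≤ n ≤ N and 1 ≤ k ≤ n/2, where (n,k) and (n',k') are equivalent when the generalised Petersen graphs P(n,k) and P(n',k') are isomorphic as simple graphs; and let B(N) be the number of such equivalence classes that contain some pair (n,k) with k² ≡ 1 (mod n) (equivalently, by the theorem of Nedela and Škoviera, the classes whose graphs are Cayley graphs). Then B(N)/A(N) → 0 as N → ∞; that is, almost all generalised Petersen graphs are not Cayley graphs. -/

import Mathlib

open scoped Classical

/-- The generalised Petersen graph `P(n,k)` on vertex set `ZMod n × Bool`: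
`(i, false)` is the outer vertex `a i`, `(i, true)` is the inner vertex `b i`;
edges are `a i a (i+1)`, `a i b i` and `b i b (i+k)` (indices mod `n`). -/
def petersen (n k : ℕ) : SimpleGraph (ZMod n × Bool) :=
  SimpleGraph.fromRel fun v w =>
    (v.2 = false ∧ w.2 = false ∧ w.1 = v.1 + 1) ∨
    (v.2 = false ∧ w.2 = true ∧ w.1 = v.1) ∨
    (v.2 = true ∧ w.2 = true ∧ w.1 = v.1 + (k : ZMod n))

/-- Pairs `(n, k)` with `3 ≤ n ≤ N` and `1 ≤ k ≤ n / 2`. -/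
def gpPairs (N : ℕ) : Finset (ℕ × ℕ) :=
  (Finset.range (N + 1) ×ˢ Finset.range (N + 1)).filter
    fun p => 3 ≤ p.1 ∧ 1 ≤ p.2 ∧ 2 * p.2 ≤ p.1

/-- Two pairs `(n, k)` and `(n', k')` are equivalent when the generalised
Petersen graphs `P(n,k)` and `P(n',k')` are isomorphic as simple graphs. -/
def petersenSetoid : Setoid (ℕ × ℕ) where
  r p q := Nonempty (petersen p.1 p.2 ≃g petersen q.1 q.2)
  iseqv := ⟨fun _ => ⟨SimpleGraph.Iso.refl⟩,
    fun ⟨e⟩ => ⟨e.symm⟩, fun ⟨e⟩ ⟨f⟩ => ⟨e.trans f⟩⟩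

/-- `A N`: the number of isomorphism classes of generalised Petersen graphs
`P(n,k)` with `3 ≤ n ≤ N` and `1 ≤ k ≤ n / 2`. -/
noncomputable def numGP (N : ℕ) : ℕ :=
  ((gpPairs N).image (Quotient.mk petersenSetoid)).card

/-- `B N`: the number of such isomorphism classes containing some pair `(n,k)`
with `k² ≡ 1 (mod n)`, i.e. (by Nedela–Škoviera) the classes of Cayley graphs. -/
noncomputable def numCayleyGP (N : ℕ) : ℕ :=
  (((gpPairs N).filter fun p => p.2 ^ 2 ≡ 1 [MOD p.1]).image
    (Quotient.mk petersenSetoid)).card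

open SimpleGraph Finset

variable {V V' : Type*} {G : SimpleGraph V} {G' : SimpleGraph V'}

lemma iso_dist_le (φ : G ≃g G') (u v : V) : G'.dist (φ u) (φ v) ≤ G.dist u v := by
  by_cases h : G.Reachable u v
  · obtain ⟨p, hp⟩ := h.exists_walk_length_eq_dist
    calc G'.dist (φ u) (φ v) ≤ (p.map φ.toHom).length := SimpleGraph.dist_le _
      _ = p.length := p.length_map _
      _ = G.dist u v := hp
  · have h' : ¬ G'.Reachable (φ u) (φ v) := by
      intro ⟨q⟩
      exact h ⟨(q.map φ.symm.toHom).copy (by simp) (by simp)⟩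
    rw [SimpleGraph.dist_eq_zero_of_not_reachable h,
        SimpleGraph.dist_eq_zero_of_not_reachable h']

lemma iso_dist_eq (φ : G ≃g G') (u v : V) : G'.dist (φ u) (φ v) = G.dist u v := by
  refine le_antisymm (iso_dist_le φ u v) ?_
  have := iso_dist_le φ.symm (φ u) (φ v)
  simpa using this

noncomputable def myDiam {V : Type*} [Fintype V] (G : SimpleGraph V) : ℕ :=
  Finset.univ.sup fun p : V × V => G.dist p.1 p.2

lemma myDiam_eq_of_iso {V V' : Type*} [Fintype V] [Fintype V']
    {G : SimpleGraph V} {G' : SimpleGraph V'} (φ : G ≃g G') : myDiam G = myDiam G' := by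
  refine le_antisymm ?_ ?_
  · exact Finset.sup_le fun p _ => by
      simpa [iso_dist_eq φ p.1 p.2, myDiam] using
        Finset.le_sup (f := fun q : V' × V' => G'.dist q.1 q.2)
          (Finset.mem_univ (φ p.1, φ p.2))
  · exact Finset.sup_le fun p _ => by
      simpa [iso_dist_eq φ.symm p.1 p.2, myDiam] using
        Finset.le_sup (f := fun q : V × V => G.dist q.1 q.2)
          (Finset.mem_univ (φ.symm p.1, φ.symm p.2))

lemma dist_le_myDiam {V : Type*} [Fintype V] (G : SimpleGraph V) (u v : V) :
    G.dist u v ≤ myDiam G :=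
  Finset.le_sup (f := fun q : V × V => G.dist q.1 q.2) (Finset.mem_univ (u, v))
section walks

lemma one_ne_zero_zmod {n : ℕ} (hn : 3 ≤ n) : (1 : ZMod n) ≠ 0 := by
  haveI : Fact (1 < n) := ⟨by omega⟩
  exact one_ne_zero

lemma k_ne_zero_zmod {n k : ℕ} (hk : 1 ≤ k) (hkn : 2 * k ≤ n) : (k : ZMod n) ≠ 0 := by
  haveI : NeZero n := ⟨by omega⟩
  rw [Ne, ZMod.natCast_eq_zero_iff]
  intro h
  have := Nat.le_of_dvd (by omega) h
  omega

lemma adj_outer {n k : ℕ} (hn : 3 ≤ n) (i : ZMod n) :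
    (petersen n k).Adj (i, false) (i + 1, false) := by
  refine ⟨?_, Or.inl (Or.inl ⟨rfl, rfl, rfl⟩)⟩
  simp only [Ne, Prod.mk.injEq, and_true]
  intro h
  exact one_ne_zero_zmod hn (by linear_combination -h)

lemma adj_spoke {n k : ℕ} (i : ZMod n) : (petersen n k).Adj (i, false) (i, true) :=
  ⟨by simp, Or.inl (Or.inr (Or.inl ⟨rfl, rfl, rfl⟩))⟩

lemma adj_inner {n k : ℕ} (hk : 1 ≤ k) (hkn : 2 * k ≤ n) (i : ZMod n) :
    (petersen n k).Adj (i, true) (i + k, true) := by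
  refine ⟨?_, Or.inl (Or.inr (Or.inr ⟨rfl, rfl, rfl⟩))⟩
  simp only [Ne, Prod.mk.injEq, and_true]
  intro h
  exact k_ne_zero_zmod hk hkn (by linear_combination -h)

lemma walk_outer_fwd {n k : ℕ} (hn : 3 ≤ n) (i : ZMod n) (d : ℕ) :
    ∃ w : (petersen n k).Walk (i, false) (i + (d : ZMod n), false), w.length = d := by
  induction d with
  | zero => exact ⟨SimpleGraph.Walk.nil.copy rfl (by push_cast; ring_nf), by simp⟩
  | succ d ih =>
    obtain ⟨w, hw⟩ := ih
    have he : ((i + (d : ZMod n)) + 1, false) = (i + ((d+1 : ℕ) : ZMod n), false) := by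
      congr 1
      push_cast
      ring
    exact ⟨(w.concat (adj_outer hn _)).copy rfl he, by simp [hw]⟩

lemma walk_inner_fwd {n k : ℕ} (hk : 1 ≤ k) (hkn : 2 * k ≤ n) (i : ZMod n) (d : ℕ) :
    ∃ w : (petersen n k).Walk (i, true) (i + ((d * k : ℕ) : ZMod n), true), w.length = d := by
  induction d with
  | zero => exact ⟨SimpleGraph.Walk.nil.copy rfl (by push_cast; ring_nf), by simp⟩
  | succ d ih =>
    obtain ⟨w, hw⟩ := ih
    have he : ((i + ((d * k : ℕ) : ZMod n)) + (k : ZMod n), true) = (i + (((d+1) * k : ℕ) : ZMod n), true) := by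
      congr 1
      push_cast
      ring
    exact ⟨(w.concat (adj_inner hk hkn _)).copy rfl he, by simp [hw]⟩

lemma walk_outer_bwd {n k : ℕ} (hn : 3 ≤ n) (i : ZMod n) (d : ℕ) :
    ∃ w : (petersen n k).Walk (i, false) (i - (d : ZMod n), false), w.length = d := by
  obtain ⟨w, hw⟩ := walk_outer_fwd (n := n) (k := k) hn (i - (d : ZMod n)) d
  exact ⟨(w.copy rfl (by simp)).reverse, by simp [hw]⟩

lemma walk_inner_bwd {n k : ℕ} (hk : 1 ≤ k) (hkn : 2 * k ≤ n) (i : ZMod n) (d : ℕ) :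
    ∃ w : (petersen n k).Walk (i, true) (i - ((d * k : ℕ) : ZMod n), true), w.length = d := by
  obtain ⟨w, hw⟩ := walk_inner_fwd (n := n) (k := k) hk hkn (i - ((d * k : ℕ) : ZMod n)) d
  exact ⟨(w.copy rfl (by simp)).reverse, by simp [hw]⟩

end walks
section distbounds

variable {n k : ℕ}

lemma dist_outer_le (hn : 3 ≤ n) (hk : 1 ≤ k) (hkn : 2 * k ≤ n) (i j : ZMod n) :
    (petersen n k).dist (i, false) (j, false) ≤ n / (2 * k) + k + 1 := by
  haveI : NeZero n := ⟨by omega⟩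
  set v := (j - i).val with hv
  have hvlt : v < n := ZMod.val_lt _
  have hcast : ((v : ℕ) : ZMod n) = j - i := by
    simp [hv, ZMod.natCast_val, ZMod.cast_id]
  have hqle : ∀ u : ℕ, u ≤ n / 2 → u / k * k + u % k = u ∧ u / k ≤ n / (2 * k) ∧ u % k < k := by
    intro u hu
    refine ⟨by rw [mul_comm]; exact Nat.div_add_mod u k, ?_, Nat.mod_lt _ (by omega)⟩
    calc u / k ≤ (n / 2) / k := Nat.div_le_div_right hu
      _ = n / (2 * k) := Nat.div_div_eq_div_mul n 2 k
  rcases le_or_gt v (n / 2) with hc | hc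
  · obtain ⟨hq, hqb, hrb⟩ := hqle v hc
    obtain ⟨w2, hw2⟩ := walk_inner_fwd (n := n) hk hkn i (v / k)
    obtain ⟨w4, hw4⟩ := walk_outer_fwd (k := k) hn (i + ((v / k * k : ℕ) : ZMod n)) (v % k)
    have he : (i + ((v / k * k : ℕ) : ZMod n) + ((v % k : ℕ) : ZMod n), false)
        = (j, false) := by
      congr 1
      calc i + ((v / k * k : ℕ) : ZMod n) + ((v % k : ℕ) : ZMod n)
          = i + ((v / k * k + v % k : ℕ) : ZMod n) := by push_cast; ring
        _ = i + (j - i) := by rw [hq, hcast]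
        _ = j := by ring
    have hd := SimpleGraph.dist_le
      (((((adj_spoke (k := k) i).toWalk.append w2).append
        (adj_spoke _).symm.toWalk).append w4).copy rfl he)
    simp only [SimpleGraph.Walk.length_copy, SimpleGraph.Walk.length_append,
      hw2, hw4, SimpleGraph.Adj.toWalk, SimpleGraph.Walk.length_cons, SimpleGraph.Walk.length_nil] at hd
    omega
  · set v' := n - v with hv'
    have hc' : v' ≤ n / 2 := by omega
    obtain ⟨hq, hqb, hrb⟩ := hqle v' hc'
    obtain ⟨w2, hw2⟩ := walk_inner_bwd (n := n) hk hkn i (v' / k)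
    obtain ⟨w4, hw4⟩ := walk_outer_bwd (k := k) hn (i - ((v' / k * k : ℕ) : ZMod n)) (v' % k)
    have he : (i - ((v' / k * k : ℕ) : ZMod n) - ((v' % k : ℕ) : ZMod n), false)
        = (j, false) := by
      congr 1
      calc i - ((v' / k * k : ℕ) : ZMod n) - ((v' % k : ℕ) : ZMod n)
          = i - ((v' / k * k + v' % k : ℕ) : ZMod n) := by push_cast; ring
        _ = i - ((n - v : ℕ) : ZMod n) := by rw [hq]
        _ = i - ((n : ZMod n) - ((v : ℕ) : ZMod n)) := by rw [Nat.cast_sub hvlt.le]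
        _ = j := by rw [ZMod.natCast_self, hcast]; ring
    have hd := SimpleGraph.dist_le
      (((((adj_spoke (k := k) i).toWalk.append w2).append
        (adj_spoke _).symm.toWalk).append w4).copy rfl he)
    simp only [SimpleGraph.Walk.length_copy, SimpleGraph.Walk.length_append,
      hw2, hw4, SimpleGraph.Adj.toWalk, SimpleGraph.Walk.length_cons, SimpleGraph.Walk.length_nil] at hd
    omega

lemma walk_to_outer (hn : 3 ≤ n) (u : ZMod n × Bool) :
    ∃ w : (petersen n k).Walk u (u.1, false), w.length ≤ 1 := by
  rcases u with ⟨i, _ | _⟩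
  · exact ⟨SimpleGraph.Walk.nil, by simp⟩
  · exact ⟨(adj_spoke i).symm.toWalk, by simp⟩

lemma petersen_reachable (hn : 3 ≤ n) (hk : 1 ≤ k) (hkn : 2 * k ≤ n)
    (u v : ZMod n × Bool) : (petersen n k).Reachable u v := by
  haveI : NeZero n := ⟨by omega⟩
  obtain ⟨w1, -⟩ := walk_to_outer (k := k) hn u
  obtain ⟨w3, -⟩ := walk_to_outer (k := k) hn v
  obtain ⟨w2, -⟩ := walk_outer_fwd (k := k) hn u.1 ((v.1 - u.1).val)
  have he : (u.1 + (((v.1 - u.1).val : ℕ) : ZMod n), false) = (v.1, false) := by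
    congr 1
    have hcast : (((v.1 - u.1).val : ℕ) : ZMod n) = v.1 - u.1 := by
      simp [ZMod.natCast_val, ZMod.cast_id]
    rw [hcast]; ring
  exact ⟨(w1.append (w2.copy rfl he)).append w3.reverse⟩

end distbounds
section diambounds

variable {n k k' : ℕ}

lemma myDiam_petersen_le [NeZero n] (hn : 3 ≤ n) (hk : 1 ≤ k) (hkn : 2 * k ≤ n) :
    myDiam (petersen n k) ≤ n / (2 * k) + k + 3 := by
  refine Finset.sup_le ?_
  rintro ⟨u, v⟩ -
  obtain ⟨w1, hw1⟩ := walk_to_outer (k := k) hn u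
  obtain ⟨w3, hw3⟩ := walk_to_outer (k := k) hn v
  haveI : NeZero n := ⟨by omega⟩
  have hconn : (petersen n k).Connected :=
    ⟨petersen_reachable hn hk hkn⟩
  calc (petersen n k).dist u v
      ≤ (petersen n k).dist u (u.1, false) + (petersen n k).dist (u.1, false) v :=
        hconn.dist_triangle
    _ ≤ (petersen n k).dist u (u.1, false) + ((petersen n k).dist (u.1, false) (v.1, false)
        + (petersen n k).dist (v.1, false) v) := by
        have := hconn.dist_triangle (u := (u.1, false)) (v := (v.1, false)) (w := v)
        omega
    _ ≤ 1 + ((n / (2 * k) + k + 1) + 1) := by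
        have d1 : (petersen n k).dist u (u.1, false) ≤ 1 :=
          le_trans (SimpleGraph.dist_le w1) hw1
        have d2 : (petersen n k).dist (u.1, false) (v.1, false) ≤ n / (2 * k) + k + 1 :=
          dist_outer_le hn hk hkn _ _
        have d3 : (petersen n k).dist (v.1, false) v ≤ 1 := by
          rw [SimpleGraph.dist_comm]
          exact le_trans (SimpleGraph.dist_le w3) hw3
        omega
    _ = n / (2 * k) + k + 3 := by omega

lemma walk_disp {u v : ZMod n × Bool} (w : (petersen n k).Walk u v) :
    ∃ a b : ℤ, a.natAbs + b.natAbs ≤ w.length ∧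
      (v.1 - u.1 : ZMod n) = (a : ℤ) + (b : ℤ) * (k : ℕ) := by
  induction w with
  | nil => exact ⟨0, 0, by simp, by push_cast; ring⟩
  | @cons u x v h p ih =>
    obtain ⟨a, b, hab, hd⟩ := ih
    simp only [petersen, SimpleGraph.fromRel_adj] at h
    obtain ⟨-, hrel⟩ := h
    push_cast at hd
    rcases hrel with (⟨-, -, h1⟩ | ⟨-, -, h1⟩ | ⟨-, -, h1⟩) |
      (⟨-, -, h1⟩ | ⟨-, -, h1⟩ | ⟨-, -, h1⟩)
    · refine ⟨a + 1, b, ?_, ?_⟩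
      · have := Int.natAbs_add_le a 1
        simp only [SimpleGraph.Walk.length_cons]
        omega
      · push_cast
        linear_combination hd + h1
    · refine ⟨a, b, ?_, ?_⟩
      · simp only [SimpleGraph.Walk.length_cons]; omega
      · push_cast
        linear_combination hd + h1
    · refine ⟨a, b + 1, ?_, ?_⟩
      · have := Int.natAbs_add_le b 1
        simp only [SimpleGraph.Walk.length_cons]
        omega
      · push_cast
        linear_combination hd + h1
    · refine ⟨a - 1, b, ?_, ?_⟩
      · have := Int.natAbs_sub_le a 1
        simp only [SimpleGraph.Walk.length_cons]
        omega
      · push_cast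
        linear_combination hd - h1
    · refine ⟨a, b, ?_, ?_⟩
      · simp only [SimpleGraph.Walk.length_cons]; omega
      · push_cast
        linear_combination hd - h1
    · refine ⟨a, b - 1, ?_, ?_⟩
      · have := Int.natAbs_sub_le b 1
        simp only [SimpleGraph.Walk.length_cons]
        omega
      · push_cast
        linear_combination hd - h1

lemma n_div_two_le_k_mul_dist (hn : 3 ≤ n) (hk : 1 ≤ k) (hkn : 2 * k ≤ n) :
    n / 2 ≤ k * (petersen n k).dist ((0 : ZMod n), false) (((n / 2 : ℕ) : ZMod n), false) := by
  haveI : NeZero n := ⟨by omega⟩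
  set m := n / 2 with hm
  have hreach := petersen_reachable hn hk hkn ((0 : ZMod n), false) (((m : ℕ) : ZMod n), false)
  obtain ⟨p, hp⟩ := hreach.exists_walk_length_eq_dist
  obtain ⟨a, b, hab, hd⟩ := walk_disp p
  by_contra hlt
  push_neg at hlt
  set L := (petersen n k).dist ((0 : ZMod n), false) (((m : ℕ) : ZMod n), false) with hL
  rw [hp] at hab
  have hzc : (((a + b * (k : ℤ)) - (m : ℤ) : ℤ) : ZMod n) = 0 := by
    push_cast
    push_cast at hd
    linear_combination -hd
  have hdvd : (n : ℤ) ∣ (a + b * (k : ℤ)) - (m : ℤ) := by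
    rwa [ZMod.intCast_zmod_eq_zero_iff_dvd] at hzc
  have hzabs : (a + b * (k : ℤ)).natAbs ≤ a.natAbs + b.natAbs * k := by
    calc (a + b * (k : ℤ)).natAbs ≤ a.natAbs + (b * (k : ℤ)).natAbs :=
          Int.natAbs_add_le a (b * k)
      _ = a.natAbs + b.natAbs * k := by rw [Int.natAbs_mul]; simp
  have h1 : a.natAbs + b.natAbs * k ≤ (a.natAbs + b.natAbs) * k := by
    have h0 : a.natAbs ≤ a.natAbs * k := Nat.le_mul_of_pos_right _ (by omega)
    nlinarith
  have h2 : (a.natAbs + b.natAbs) * k ≤ L * k := Nat.mul_le_mul_right _ hab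
  have hzm : (a + b * (k : ℤ)).natAbs < m := by
    have hlt' : L * k < m := by rwa [Nat.mul_comm] at hlt
    omega
  have hzne' : a + b * (k : ℤ) ≠ (m : ℤ) := by
    intro h
    rw [h, Int.natAbs_natCast] at hzm
    omega
  have hzne : (a + b * (k : ℤ)) - (m : ℤ) ≠ 0 := sub_ne_zero.mpr hzne'
  have habs : ((a + b * (k : ℤ)) - (m : ℤ)).natAbs ≤ (a + b * (k : ℤ)).natAbs + m := by
    have := Int.natAbs_sub_le (a + b * (k : ℤ)) (m : ℤ)
    simpa using this
  have hge : n ≤ ((a + b * (k : ℤ)) - (m : ℤ)).natAbs := by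
    refine Nat.le_of_dvd ?_ (Int.natCast_dvd.mp hdvd)
    omega
  omega

lemma myDiam_strict_anti [NeZero n] (hn : 3 ≤ n) (hk : 1 ≤ k) (hkk' : k < k')
    (hn' : 50 * k' ^ 3 ≤ n) :
    myDiam (petersen n k') < myDiam (petersen n k) := by
  have hk'1 : 1 ≤ k' := by omega
  have hcube : k' ≤ k' ^ 3 := Nat.le_self_pow (by norm_num) k'
  have hkn' : 2 * k' ≤ n := by nlinarith
  have hkn : 2 * k ≤ n := by omega
  have h1 : n / 2 ≤ k * myDiam (petersen n k) := by
    refine le_trans (n_div_two_le_k_mul_dist hn hk hkn) ?_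
    exact Nat.mul_le_mul_left _ (dist_le_myDiam _ _ _)
  have h2 : myDiam (petersen n k') ≤ n / (2 * k') + k' + 3 :=
    myDiam_petersen_le hn hk'1 hkn'
  set Q := n / (2 * k') with hQ
  have e1 : 25 * k' ^ 2 ≤ Q := by
    rw [hQ, Nat.le_div_iff_mul_le (by omega)]
    nlinarith
  have e2 : k' * Q ≤ n / 2 := by
    rw [Nat.le_div_iff_mul_le (by omega)]
    have : Q * (2 * k') ≤ n := Nat.div_mul_le_self n (2 * k')
    nlinarith
  have key : k * (Q + k' + 3) < n / 2 := by
    have hkk : k ≤ k' - 1 := by omega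
    have : k * (Q + k' + 3) < k' * Q := by nlinarith
    omega
  have : k * myDiam (petersen n k') < k * myDiam (petersen n k) := by
    calc k * myDiam (petersen n k') ≤ k * (Q + k' + 3) := Nat.mul_le_mul_left _ h2
      _ < n / 2 := key
      _ ≤ k * myDiam (petersen n k) := h1
  exact Nat.lt_of_mul_lt_mul_left this

end diambounds
section lowerA

lemma iso_n_eq {n k n' k' : ℕ} (hn : 3 ≤ n) (hn' : 3 ≤ n')
    (φ : petersen n k ≃g petersen n' k') : n = n' := by
  haveI : NeZero n := ⟨by omega⟩
  haveI : NeZero n' := ⟨by omega⟩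
  have := Fintype.card_congr φ.toEquiv
  simpa [ZMod.card] using this

lemma numGP_lower {N : ℕ} (hN : 100 ^ 4 ≤ N) :
    (N / 2) * Nat.sqrt (Nat.sqrt N) ≤ numGP N := by
  set K := Nat.sqrt (Nat.sqrt N) with hK
  have hK100 : 100 ≤ K := by
    rw [hK, Nat.le_sqrt, Nat.le_sqrt]
    calc 100 * 100 * (100 * 100) = 100 ^ 4 := by norm_num
      _ ≤ N := hN
  have hK4 : K * K * (K * K) ≤ N := by
    have h1 : K * K ≤ Nat.sqrt N := by
      have := Nat.sqrt_le' (Nat.sqrt N)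
      nlinarith
    have h2 : Nat.sqrt N * Nat.sqrt N ≤ N := by
      have := Nat.sqrt_le' N
      nlinarith
    calc K * K * (K * K) ≤ Nat.sqrt N * Nat.sqrt N := Nat.mul_le_mul h1 h1
      _ ≤ N := h2
  have hcube : ∀ k ≤ K, 50 * k ^ 3 ≤ N / 2 := by
    intro k hk
    have h1 : k ^ 3 ≤ K ^ 3 := Nat.pow_le_pow_left hk 3
    have h2 : 100 * K ^ 3 ≤ K * K * (K * K) := by ring_nf; nlinarith
    omega
  set T : Finset (ℕ × ℕ) := Finset.Icc (N / 2) N ×ˢ Finset.Icc 1 K with hT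
  have hmem : ∀ p ∈ T, N / 2 ≤ p.1 ∧ p.1 ≤ N ∧ 1 ≤ p.2 ∧ p.2 ≤ K := by
    intro p hp
    rw [hT, Finset.mem_product, Finset.mem_Icc, Finset.mem_Icc] at hp
    exact ⟨hp.1.1, hp.1.2, hp.2.1, hp.2.2⟩
  have hcond : ∀ p ∈ T, 3 ≤ p.1 ∧ 1 ≤ p.2 ∧ 50 * p.2 ^ 3 ≤ p.1 ∧ 2 * p.2 ≤ p.1 := by
    intro p hp
    obtain ⟨h1, h2, h3, h4⟩ := hmem p hp
    have h5 := hcube p.2 h4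
    have h6 : p.2 ≤ p.2 ^ 3 := Nat.le_self_pow (by norm_num) _
    refine ⟨by omega, h3, by omega, by omega⟩
  have hsub : T ⊆ gpPairs N := by
    intro p hp
    obtain ⟨h1, h2, h3, h4⟩ := hmem p hp
    obtain ⟨h5, -, -, h8⟩ := hcond p hp
    simp only [gpPairs, Finset.mem_filter, Finset.mem_product, Finset.mem_range]
    exact ⟨⟨by omega, by omega⟩, h5, h3, h8⟩
  have hinj : Set.InjOn (Quotient.mk petersenSetoid) T := by
    rintro ⟨n, k⟩ hp ⟨n', k'⟩ hq h
    obtain ⟨h3n, h1k, h50, h2k⟩ := hcond _ hp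
    obtain ⟨h3n', h1k', h50', h2k'⟩ := hcond _ hq
    have hr : Nonempty (petersen n k ≃g petersen n' k') := Quotient.eq.mp h
    obtain ⟨φ⟩ := hr
    have hnn : n = n' := iso_n_eq h3n h3n' φ
    subst hnn
    haveI : NeZero n := ⟨by omega⟩
    have hkk : k = k' := by
      by_contra hne
      rcases Nat.lt_or_ge k k' with hlt | hge
      · exact absurd (myDiam_eq_of_iso φ)
          (Nat.ne_of_gt (myDiam_strict_anti h3n h1k hlt h50'))
      · have hlt' : k' < k := by omega
        exact absurd (myDiam_eq_of_iso φ.symm)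
          (Nat.ne_of_gt (myDiam_strict_anti h3n h1k' hlt' h50))
    rw [hkk]
  calc (N / 2) * K ≤ (N - N / 2 + 1) * K := by
        have : N / 2 ≤ N - N / 2 := by omega
        exact Nat.mul_le_mul_right _ (by omega)
    _ = T.card := by
        rw [hT, Finset.card_product, Nat.card_Icc, Nat.card_Icc]
        congr 1 <;> omega
    _ = (T.image (Quotient.mk petersenSetoid)).card :=
        (Finset.card_image_of_injOn hinj).symm
    _ ≤ numGP N := Finset.card_le_card (Finset.image_subset_image hsub)

end lowerA
section upperB

lemma sol_card {n : ℕ} (hn : 3 ≤ n) :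
    ((Finset.Icc 1 (n / 2)).filter fun k => k ^ 2 ≡ 1 [MOD n]).card
      ≤ n.divisors.card ^ 2 := by
  have key : ∀ k ∈ (Finset.Icc 1 (n / 2)).filter (fun k => k ^ 2 ≡ 1 [MOD n]),
      ∀ k' ∈ (Finset.Icc 1 (n / 2)).filter (fun k => k ^ 2 ≡ 1 [MOD n]),
      k' ≤ k →
      Nat.gcd (k - 1) n = Nat.gcd (k' - 1) n →
      Nat.gcd (k + 1) n = Nat.gcd (k' + 1) n → k = k' := by
    intro k hk k' hk' hle ha hb
    rw [Finset.mem_filter, Finset.mem_Icc] at hk hk'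
    obtain ⟨⟨hk1, hk2⟩, hkm⟩ := hk
    obtain ⟨⟨hk1', hk2'⟩, hkm'⟩ := hk'
    set a := Nat.gcd (k - 1) n with hadef
    set b := Nat.gcd (k + 1) n with hbdef
    have ha0 : 0 < a := Nat.gcd_pos_of_pos_right _ (by omega)
    have hb0 : 0 < b := Nat.gcd_pos_of_pos_right _ (by omega)
    -- n divides (k-1)(k+1)
    have hsq : n ∣ k ^ 2 - 1 := (Nat.modEq_iff_dvd' (Nat.one_le_pow _ _ (by omega))).mp hkm.symm
    obtain ⟨m, rfl⟩ : ∃ m, k = m + 1 := ⟨k - 1, by omega⟩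
    have hfac : (m + 1) ^ 2 - 1 = m * (m + 2) := by
      have h1 : (m + 1) ^ 2 = m * (m + 2) + 1 := by ring
      omega
    rw [hfac] at hsq
    have hsimp : m + 1 - 1 = m := by omega
    rw [hsimp] at hadef
    -- n ∣ a * b
    have hnab : n ∣ a * b := by
      have h1 : Nat.gcd n (m * (m + 2)) = n := Nat.gcd_eq_left hsq
      have h2 : Nat.gcd n (m * (m + 2)) ∣ Nat.gcd n m * Nat.gcd n (m + 2) :=
        gcd_mul_dvd_mul_gcd n m (m + 2)
      rw [h1] at h2
      rw [hadef, hbdef]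
      have e1 : Nat.gcd m n = Nat.gcd n m := Nat.gcd_comm _ _
      have e2 : Nat.gcd (m + 1 + 1) n = Nat.gcd n (m + 2) := by
        rw [Nat.gcd_comm]
      rw [e1, e2]
      exact h2
    have hnab' : n ≤ a * b := Nat.le_of_dvd (by positivity) hnab
    -- gcd a b divides 2
    have hg2 : Nat.gcd a b ∣ 2 := by
      have h1 : Nat.gcd a b ∣ m := (Nat.gcd_dvd_left a b).trans
        (by rw [hadef]; exact Nat.gcd_dvd_left _ _)
      have h2 : Nat.gcd a b ∣ m + 2 := (Nat.gcd_dvd_right a b).trans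
        (by rw [hbdef]; exact (by norm_num : m + 1 + 1 = m + 2) ▸ Nat.gcd_dvd_left _ _)
      have h3 := Nat.dvd_sub h2 h1
      have he : m + 2 - m = 2 := by omega
      rwa [he] at h3
    have hglcm : Nat.gcd a b * Nat.lcm a b = a * b := Nat.gcd_mul_lcm a b
    have hlcm2 : n ≤ 2 * Nat.lcm a b := by
      have hgle : Nat.gcd a b ≤ 2 := Nat.le_of_dvd (by norm_num) hg2
      have : Nat.gcd a b * Nat.lcm a b ≤ 2 * Nat.lcm a b :=
        Nat.mul_le_mul_right _ hgle
      omega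
    -- a and b divide k - k'
    have hd1 : a ∣ (m + 1) - k' := by
      have h1 : a ∣ m := by rw [hadef]; exact Nat.gcd_dvd_left _ _
      have h2 : a ∣ k' - 1 := by rw [ha]; exact Nat.gcd_dvd_left _ _
      have := Nat.dvd_sub h1 h2
      have he : m - (k' - 1) = (m + 1) - k' := by omega
      rwa [he] at this
    have hd2 : b ∣ (m + 1) - k' := by
      have h1 : b ∣ m + 2 := by
        rw [hbdef]
        exact (by norm_num : m + 1 + 1 = m + 2) ▸ Nat.gcd_dvd_left _ _
      have h2 : b ∣ k' + 1 := by rw [hb]; exact Nat.gcd_dvd_left _ _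
      have := Nat.dvd_sub h1 h2
      have he : (m + 2) - (k' + 1) = (m + 1) - k' := by omega
      rwa [he] at this
    have hlcmd : Nat.lcm a b ∣ (m + 1) - k' := Nat.lcm_dvd hd1 hd2
    by_contra hne
    have hpos : 0 < (m + 1) - k' := by omega
    have := Nat.le_of_dvd hpos hlcmd
    omega
  classical
  have hcard := Finset.card_le_card_of_injOn
    (t := n.divisors ×ˢ n.divisors)
    (fun k => (Nat.gcd (k - 1) n, Nat.gcd (k + 1) n))
    (fun k hk => by
      rw [Finset.mem_coe, Finset.mem_product, Nat.mem_divisors, Nat.mem_divisors]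
      exact ⟨⟨Nat.gcd_dvd_right _ _, by omega⟩, ⟨Nat.gcd_dvd_right _ _, by omega⟩⟩)
    (fun k hk k' hk' h => by
      rw [Prod.mk.injEq] at h
      rcases le_total k' k with hle | hle
      · exact key k (Finset.mem_coe.mp hk) k' (Finset.mem_coe.mp hk') hle h.1 h.2
      · exact (key k' (Finset.mem_coe.mp hk') k (Finset.mem_coe.mp hk) hle
          h.1.symm h.2.symm).symm)
  rw [Finset.card_product] at hcard
  calc _ ≤ n.divisors.card * n.divisors.card := hcard
    _ = n.divisors.card ^ 2 := (pow_two _).symm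

lemma numCayley_le (N : ℕ) :
    numCayleyGP N ≤ ∑ n ∈ Finset.Icc 1 N, n.divisors.card ^ 2 := by
  classical
  calc numCayleyGP N
      ≤ ((gpPairs N).filter fun p => p.2 ^ 2 ≡ 1 [MOD p.1]).card :=
        Finset.card_image_le
    _ ≤ ((Finset.Icc 3 N).biUnion fun n =>
          {n} ×ˢ ((Finset.Icc 1 (n / 2)).filter fun k => k ^ 2 ≡ 1 [MOD n])).card := by
        refine Finset.card_le_card ?_
        rintro ⟨n, k⟩ hp
        simp only [Finset.mem_filter, gpPairs, Finset.mem_product,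
          Finset.mem_range] at hp
        obtain ⟨⟨⟨hn1, hk1⟩, hn3, hk2, hkn⟩, hmod⟩ := hp
        rw [Finset.mem_biUnion]
        refine ⟨n, by rw [Finset.mem_Icc]; omega, ?_⟩
        rw [Finset.mem_product, Finset.mem_singleton, Finset.mem_filter,
          Finset.mem_Icc]
        exact ⟨rfl, ⟨hk2, by omega⟩, hmod⟩
    _ ≤ ∑ n ∈ Finset.Icc 3 N,
          ({n} ×ˢ ((Finset.Icc 1 (n / 2)).filter fun k => k ^ 2 ≡ 1 [MOD n])).card :=
        Finset.card_biUnion_le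
    _ = ∑ n ∈ Finset.Icc 3 N,
          ((Finset.Icc 1 (n / 2)).filter fun k => k ^ 2 ≡ 1 [MOD n]).card := by
        refine Finset.sum_congr rfl fun n _ => ?_
        rw [Finset.card_product, Finset.card_singleton, one_mul]
    _ ≤ ∑ n ∈ Finset.Icc 3 N, n.divisors.card ^ 2 := by
        refine Finset.sum_le_sum fun n hn => ?_
        rw [Finset.mem_Icc] at hn
        exact sol_card hn.1
    _ ≤ ∑ n ∈ Finset.Icc 1 N, n.divisors.card ^ 2 :=
        Finset.sum_le_sum_of_subset (Finset.Icc_subset_Icc_left (by norm_num))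

end upperB
section analytic

open Finset

lemma filter_dvd_card (N p : ℕ) :
    ((Finset.Icc 1 N).filter (fun n => p ∣ n)).card = N / p := by
  have h : Finset.Icc 1 N = Finset.Ioc 0 N := by
    ext x
    simp only [Finset.mem_Icc, Finset.mem_Ioc]
    omega
  rw [h]
  exact Nat.Ioc_filter_dvd_card_eq_div N p

lemma divisors_card_eq_sum {N n : ℕ} (h1 : 1 ≤ n) (h2 : n ≤ N) :
    (n.divisors.card : ℝ) = ∑ a ∈ Finset.Icc 1 N, if a ∣ n then (1 : ℝ) else 0 := by
  rw [Finset.sum_boole]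
  congr 1
  congr 1
  ext a
  simp only [Finset.mem_filter, Finset.mem_Icc, Nat.mem_divisors]
  constructor
  · rintro ⟨hd, -⟩
    have ha1 : 1 ≤ a := by
      rcases Nat.eq_zero_or_pos a with rfl | h
      · simp at hd
        omega
      · omega
    exact ⟨⟨ha1, (Nat.le_of_dvd (by omega) hd).trans h2⟩, hd⟩
  · rintro ⟨⟨ha1, ha2⟩, hd⟩
    exact ⟨hd, by omega⟩

lemma sum_indicator_div_le {N g : ℕ} (hg : 1 ≤ g) :
    ∑ a ∈ Finset.Icc 1 N, (if g ∣ a then (1 : ℝ) / a else 0)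
      ≤ (1 / g) * ∑ j ∈ Finset.Icc 1 N, (1 : ℝ) / j := by
  have himg : (Finset.Icc 1 N).filter (fun a => g ∣ a)
      = (Finset.Icc 1 (N / g)).image (fun j => g * j) := by
    ext a
    simp only [Finset.mem_filter, Finset.mem_Icc, Finset.mem_image]
    constructor
    · rintro ⟨⟨ha1, ha2⟩, j, rfl⟩
      have hj1 : 1 ≤ j := by
        rcases Nat.eq_zero_or_pos j with rfl | h
        · simp at ha1
        · omega
      refine ⟨j, ⟨hj1, ?_⟩, rfl⟩
      rw [Nat.le_div_iff_mul_le (by omega)]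
      calc j * g = g * j := mul_comm _ _
        _ ≤ N := ha2
    · rintro ⟨j, ⟨hj1, hj2⟩, rfl⟩
      rw [Nat.le_div_iff_mul_le (by omega)] at hj2
      refine ⟨⟨?_, ?_⟩, dvd_mul_right g j⟩
      · exact Nat.one_le_iff_ne_zero.mpr (Nat.mul_ne_zero (by omega) (by omega))
      · calc g * j = j * g := mul_comm _ _
          _ ≤ N := hj2
  rw [← Finset.sum_filter, himg, Finset.sum_image (by
    intro x hx y hy hxy
    exact Nat.eq_of_mul_eq_mul_left (by omega) hxy)]
  have hsub : Finset.Icc 1 (N / g) ⊆ Finset.Icc 1 N := by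
    apply Finset.Icc_subset_Icc le_rfl
    exact Nat.div_le_self N g
  calc ∑ j ∈ Finset.Icc 1 (N / g), (1 : ℝ) / ((g * j : ℕ) : ℝ)
      = ∑ j ∈ Finset.Icc 1 (N / g), (1 / g) * ((1 : ℝ) / j) := by
        refine Finset.sum_congr rfl fun j hj => ?_
        rw [Nat.cast_mul]
        field_simp
    _ ≤ ∑ j ∈ Finset.Icc 1 N, (1 / g) * ((1 : ℝ) / j) := by
        refine Finset.sum_le_sum_of_subset_of_nonneg hsub fun j hj _ => ?_
        positivity
    _ = (1 / g) * ∑ j ∈ Finset.Icc 1 N, (1 : ℝ) / j := by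
        rw [← Finset.mul_sum]

lemma sum_divisors_sq_le (N : ℕ) :
    (∑ n ∈ Finset.Icc 1 N, (n.divisors.card ^ 2 : ℝ))
      ≤ N * (∑ j ∈ Finset.Icc 1 N, (1 : ℝ) / j) ^ 3 := by
  set H : ℝ := ∑ j ∈ Finset.Icc 1 N, (1 : ℝ) / j with hH
  have hH0 : 0 ≤ H := Finset.sum_nonneg fun j _ => by positivity
  -- Step 1: expand the square as a double sum of indicators
  have step1 : (∑ n ∈ Finset.Icc 1 N, (n.divisors.card ^ 2 : ℝ))
      ≤ ∑ a ∈ Finset.Icc 1 N, ∑ b ∈ Finset.Icc 1 N,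
          (N : ℝ) * Nat.gcd a b / (a * b) := by
    have expand : ∀ n ∈ Finset.Icc 1 N, (n.divisors.card ^ 2 : ℝ)
        = ∑ a ∈ Finset.Icc 1 N, ∑ b ∈ Finset.Icc 1 N,
            (if a ∣ n then (1 : ℝ) else 0) * (if b ∣ n then (1 : ℝ) else 0) := by
      intro n hn
      rw [Finset.mem_Icc] at hn
      rw [pow_two, divisors_card_eq_sum hn.1 hn.2, Finset.sum_mul_sum]
    rw [Finset.sum_congr rfl expand, Finset.sum_comm]
    refine Finset.sum_le_sum fun a ha => ?_
    rw [Finset.sum_comm]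
    refine Finset.sum_le_sum fun b hb => ?_
    rw [Finset.mem_Icc] at ha hb
    have hl1 : 1 ≤ Nat.lcm a b := Nat.pos_of_ne_zero fun h =>
      (Nat.lcm_ne_zero (by omega) (by omega)) h
    calc ∑ n ∈ Finset.Icc 1 N,
          (if a ∣ n then (1 : ℝ) else 0) * (if b ∣ n then (1 : ℝ) else 0)
        ≤ ∑ n ∈ Finset.Icc 1 N, (if Nat.lcm a b ∣ n then (1 : ℝ) else 0) := by
          refine Finset.sum_le_sum fun n _ => ?_
          split_ifs with h1 h2 h3 <;> try norm_num
          all_goals exact absurd (Nat.lcm_dvd h1 h2) h3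
      _ = ((N / Nat.lcm a b : ℕ) : ℝ) := by
          rw [Finset.sum_boole, filter_dvd_card]
      _ ≤ (N : ℝ) / (Nat.lcm a b : ℝ) := Nat.cast_div_le
      _ = (N : ℝ) * Nat.gcd a b / (a * b) := by
          have hgl : ((Nat.gcd a b * Nat.lcm a b : ℕ) : ℝ) = ((a * b : ℕ) : ℝ) := by
            rw [Nat.gcd_mul_lcm]
          push_cast at hgl
          have hg0 : (0 : ℝ) < Nat.gcd a b := by
            exact_mod_cast Nat.gcd_pos_of_pos_left b (show 0 < a by omega)
          have hl0 : (0 : ℝ) < Nat.lcm a b := by exact_mod_cast hl1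
          have ha0 : (0 : ℝ) < a := by exact_mod_cast ha.1
          have hb0 : (0 : ℝ) < b := by exact_mod_cast hb.1
          rw [div_eq_div_iff (by positivity) (by positivity)]
          linear_combination (-(N : ℝ)) * hgl
  -- Step 2: bound gcd by a sum over common divisors
  have step2 : ∑ a ∈ Finset.Icc 1 N, ∑ b ∈ Finset.Icc 1 N,
        (N : ℝ) * Nat.gcd a b / (a * b)
      ≤ (N : ℝ) * ∑ g ∈ Finset.Icc 1 N, H * H / g := by
    have inner : ∀ a ∈ Finset.Icc 1 N, ∀ b ∈ Finset.Icc 1 N,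
        (N : ℝ) * Nat.gcd a b / (a * b)
          ≤ ∑ g ∈ Finset.Icc 1 N,
              (N : ℝ) * ((if g ∣ a then (1 : ℝ) / a else 0)
                * (if g ∣ b then (1 : ℝ) / b else 0) * g) := by
      intro a ha b hb
      rw [Finset.mem_Icc] at ha hb
      have hgmem : Nat.gcd a b ∈ Finset.Icc 1 N := by
        rw [Finset.mem_Icc]
        constructor
        · exact Nat.gcd_pos_of_pos_left b (show 0 < a by omega)
        · exact le_trans (Nat.le_of_dvd (by omega) (Nat.gcd_dvd_left a b)) ha.2
      have hterm : (N : ℝ) * Nat.gcd a b / (a * b)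
          = (N : ℝ) * ((if Nat.gcd a b ∣ a then (1 : ℝ) / a else 0)
              * (if Nat.gcd a b ∣ b then (1 : ℝ) / b else 0) * (Nat.gcd a b)) := by
        rw [if_pos (Nat.gcd_dvd_left a b), if_pos (Nat.gcd_dvd_right a b)]
        have ha0 : (0 : ℝ) < a := by exact_mod_cast ha.1
        have hb0 : (0 : ℝ) < b := by exact_mod_cast hb.1
        field_simp
      rw [hterm]
      refine Finset.single_le_sum (f := fun g =>
        (N : ℝ) * ((if g ∣ a then (1 : ℝ) / a else 0)
          * (if g ∣ b then (1 : ℝ) / b else 0) * g)) (fun g hg => ?_) hgmem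
      have : (0:ℝ) ≤ (if g ∣ a then (1 : ℝ) / a else 0) := by positivity
      have : (0:ℝ) ≤ (if g ∣ b then (1 : ℝ) / b else 0) := by positivity
      positivity
    calc ∑ a ∈ Finset.Icc 1 N, ∑ b ∈ Finset.Icc 1 N, (N : ℝ) * Nat.gcd a b / (a * b)
        ≤ ∑ a ∈ Finset.Icc 1 N, ∑ b ∈ Finset.Icc 1 N, ∑ g ∈ Finset.Icc 1 N,
            (N : ℝ) * ((if g ∣ a then (1 : ℝ) / a else 0)
              * (if g ∣ b then (1 : ℝ) / b else 0) * g) := by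
          refine Finset.sum_le_sum fun a ha => Finset.sum_le_sum fun b hb => ?_
          exact inner a ha b hb
      _ = ∑ a ∈ Finset.Icc 1 N, ∑ g ∈ Finset.Icc 1 N, ∑ b ∈ Finset.Icc 1 N,
            (N : ℝ) * ((if g ∣ a then (1 : ℝ) / a else 0)
              * (if g ∣ b then (1 : ℝ) / b else 0) * g) :=
          Finset.sum_congr rfl fun a _ => Finset.sum_comm
      _ = ∑ g ∈ Finset.Icc 1 N, ∑ a ∈ Finset.Icc 1 N, ∑ b ∈ Finset.Icc 1 N,
            (N : ℝ) * ((if g ∣ a then (1 : ℝ) / a else 0)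
              * (if g ∣ b then (1 : ℝ) / b else 0) * g) :=
          Finset.sum_comm
      _ ≤ (N : ℝ) * ∑ g ∈ Finset.Icc 1 N, H * H / g := by
          rw [Finset.mul_sum]
          refine Finset.sum_le_sum fun g hg => ?_
          rw [Finset.mem_Icc] at hg
          have hsum_a : ∑ a ∈ Finset.Icc 1 N, (if g ∣ a then (1 : ℝ) / a else 0)
              ≤ (1 / g) * H := sum_indicator_div_le hg.1
          have hsa0 : 0 ≤ ∑ a ∈ Finset.Icc 1 N, (if g ∣ a then (1 : ℝ) / a else 0) :=
            Finset.sum_nonneg fun a _ => by positivity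
          have hg0 : (0 : ℝ) < g := by exact_mod_cast hg.1
          calc ∑ a ∈ Finset.Icc 1 N, ∑ b ∈ Finset.Icc 1 N,
                (N : ℝ) * ((if g ∣ a then (1 : ℝ) / a else 0)
                  * (if g ∣ b then (1 : ℝ) / b else 0) * g)
              = (N : ℝ) * g * ((∑ a ∈ Finset.Icc 1 N, (if g ∣ a then (1 : ℝ) / a else 0))
                  * (∑ b ∈ Finset.Icc 1 N, (if g ∣ b then (1 : ℝ) / b else 0))) := by
                rw [Finset.sum_mul_sum, Finset.mul_sum]
                refine Finset.sum_congr rfl fun a _ => ?_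
                rw [Finset.mul_sum]
                refine Finset.sum_congr rfl fun b _ => ?_
                ring
            _ ≤ (N : ℝ) * g * ((1 / g * H) * (1 / g * H)) := by
                refine mul_le_mul_of_nonneg_left ?_ (by positivity)
                refine mul_le_mul hsum_a hsum_a hsa0 ?_
                positivity
            _ = (N : ℝ) * (H * H / g) := by
                field_simp
  calc (∑ n ∈ Finset.Icc 1 N, (n.divisors.card ^ 2 : ℝ))
      ≤ (N : ℝ) * ∑ g ∈ Finset.Icc 1 N, H * H / g := le_trans step1 step2
    _ = (N : ℝ) * (H * H * ∑ g ∈ Finset.Icc 1 N, (1 : ℝ) / g) := by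
        congr 1
        conv_rhs => rw [Finset.mul_sum]
        refine Finset.sum_congr rfl fun g _ => ?_
        ring
    _ = N * H ^ 3 := by
        rw [← hH]
        ring

end analytic
section final

lemma harm_le (N : ℕ) : ∑ j ∈ Finset.Icc 1 N, (1 : ℝ) / j ≤ 1 + Real.log N := by
  have h1 := harmonic_le_one_add_log N
  have h2 : ((harmonic N : ℚ) : ℝ) = ∑ j ∈ Finset.Icc 1 N, (1 : ℝ) / j := by
    rw [harmonic_eq_sum_Icc]
    push_cast
    simp [one_div]
  rw [← h2]
  exact h1

lemma N_le_16K4 (N : ℕ) (h1 : 1 ≤ Nat.sqrt (Nat.sqrt N)) :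
    N ≤ 16 * Nat.sqrt (Nat.sqrt N) ^ 4 := by
  set s := Nat.sqrt N with hs
  set K := Nat.sqrt s with hK
  have a1 : N < (s + 1) * (s + 1) := Nat.lt_succ_sqrt N
  have a2 : s < (K + 1) * (K + 1) := Nat.lt_succ_sqrt s
  have b2 : (K + 1) * (K + 1) ≤ 4 * K ^ 2 := by nlinarith
  have b3 : s + 1 ≤ 4 * K ^ 2 := le_trans a2 b2
  have b4 : N < (4 * K ^ 2) * (4 * K ^ 2) :=
    lt_of_lt_of_le a1 (Nat.mul_le_mul b3 b3)
  have b5 : (4 * K ^ 2) * (4 * K ^ 2) = 16 * K ^ 4 := by ring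
  omega

lemma ratio_bound {N : ℕ} (hN : 100 ^ 4 ≤ N) :
    (numCayleyGP N : ℝ) / (numGP N : ℝ)
      ≤ 48 * (Real.log N ^ 3 / (N : ℝ) ^ ((1 : ℝ) / 4)) := by
  have hN1 : 1 ≤ N := by omega
  set K := Nat.sqrt (Nat.sqrt N) with hKdef
  have hK1 : 1 ≤ K := by
    rw [hKdef, Nat.le_sqrt, Nat.le_sqrt]
    omega
  have hNpos : (0 : ℝ) < N := by positivity
  have hrp : (0 : ℝ) < (N : ℝ) ^ ((1 : ℝ) / 4) := Real.rpow_pos_of_pos hNpos _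
  have hlog : 1 ≤ Real.log N := by
    rw [Real.le_log_iff_exp_le hNpos]
    have h := Real.exp_one_lt_d9
    have : (2.7182818286 : ℝ) ≤ N := by
      have : (3 : ℝ) ≤ N := by exact_mod_cast (by omega : 3 ≤ N)
      linarith
    linarith
  have hlog0 : 0 ≤ Real.log N := by linarith
  -- upper bound for numCayleyGP
  have hB : (numCayleyGP N : ℝ) ≤ (N : ℝ) * (1 + Real.log N) ^ 3 := by
    have b1 : (numCayleyGP N : ℝ) ≤ ∑ n ∈ Finset.Icc 1 N, (n.divisors.card ^ 2 : ℝ) := by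
      exact_mod_cast Nat.cast_le.mpr (numCayley_le N)
    have b2 := sum_divisors_sq_le N
    have b3 : (∑ j ∈ Finset.Icc 1 N, (1 : ℝ) / j) ^ 3 ≤ (1 + Real.log N) ^ 3 := by
      have hH0 : (0 : ℝ) ≤ ∑ j ∈ Finset.Icc 1 N, (1 : ℝ) / j :=
        Finset.sum_nonneg fun j _ => by positivity
      exact pow_le_pow_left₀ hH0 (harm_le N) 3
    have b4 : (N : ℝ) * (∑ j ∈ Finset.Icc 1 N, (1 : ℝ) / j) ^ 3
        ≤ (N : ℝ) * (1 + Real.log N) ^ 3 :=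
      mul_le_mul_of_nonneg_left b3 (by positivity)
    calc (numCayleyGP N : ℝ) ≤ _ := b1
      _ ≤ _ := b2
      _ ≤ _ := b4
  -- lower bound for numGP
  have hA : (N : ℝ) / 3 * ((N : ℝ) ^ ((1 : ℝ) / 4) / 2) ≤ (numGP N : ℝ) := by
    have a1 : ((N / 2 * K : ℕ) : ℝ) ≤ (numGP N : ℝ) :=
      Nat.cast_le.mpr (numGP_lower hN)
    have a2 : (N : ℝ) / 3 ≤ ((N / 2 : ℕ) : ℝ) := by
      rw [div_le_iff₀ (by norm_num)]
      have : N ≤ (N / 2) * 3 := by omega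
      exact_mod_cast this
    have a3 : (N : ℝ) ^ ((1 : ℝ) / 4) / 2 ≤ (K : ℝ) := by
      have n1 : (N : ℝ) ≤ (2 * (K : ℝ)) ^ (4 : ℕ) := by
        have := N_le_16K4 N hK1
        have : (N : ℝ) ≤ 16 * (K : ℝ) ^ 4 := by exact_mod_cast this
        nlinarith
      have n2 : (N : ℝ) ^ ((1 : ℝ) / 4) ≤ ((2 * (K : ℝ)) ^ (4 : ℕ)) ^ ((1 : ℝ) / 4) :=
        Real.rpow_le_rpow (by positivity) n1 (by norm_num)
      have n3 : ((2 * (K : ℝ)) ^ (4 : ℕ)) ^ ((1 : ℝ) / 4) = 2 * (K : ℝ) := by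
        rw [← Real.rpow_natCast (2 * (K : ℝ)) 4, ← Real.rpow_mul (by positivity)]
        norm_num
      rw [n3] at n2
      linarith
    calc (N : ℝ) / 3 * ((N : ℝ) ^ ((1 : ℝ) / 4) / 2)
        ≤ ((N / 2 : ℕ) : ℝ) * (K : ℝ) := by
          refine mul_le_mul a2 a3 (by positivity) (by positivity)
      _ = ((N / 2 * K : ℕ) : ℝ) := by push_cast; ring
      _ ≤ (numGP N : ℝ) := a1
  have hApos : (0 : ℝ) < (N : ℝ) / 3 * ((N : ℝ) ^ ((1 : ℝ) / 4) / 2) := by positivity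
  have step : (numCayleyGP N : ℝ) / (numGP N : ℝ)
      ≤ ((N : ℝ) * (1 + Real.log N) ^ 3) / ((N : ℝ) / 3 * ((N : ℝ) ^ ((1 : ℝ) / 4) / 2)) :=
    div_le_div₀ (by positivity) hB hApos hA
  refine le_trans step ?_
  have heq : ((N : ℝ) * (1 + Real.log N) ^ 3) / ((N : ℝ) / 3 * ((N : ℝ) ^ ((1 : ℝ) / 4) / 2))
      = 6 * (1 + Real.log N) ^ 3 / (N : ℝ) ^ ((1 : ℝ) / 4) := by
    field_simp
    ring
  rw [heq]
  have hcube : (1 + Real.log N) ^ 3 ≤ 8 * Real.log N ^ 3 := by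
    have e2 : Real.log N ≤ Real.log N ^ 2 := by nlinarith
    have e3 : Real.log N ^ 2 ≤ Real.log N ^ 3 := by nlinarith
    have e1 : (1 : ℝ) ≤ Real.log N ^ 3 := by nlinarith
    nlinarith [e1, e2, e3]
  calc 6 * (1 + Real.log N) ^ 3 / (N : ℝ) ^ ((1 : ℝ) / 4)
      ≤ 48 * Real.log N ^ 3 / (N : ℝ) ^ ((1 : ℝ) / 4) := by
        refine (div_le_div_iff_of_pos_right hrp).mpr ?_
        nlinarith
    _ = 48 * (Real.log N ^ 3 / (N : ℝ) ^ ((1 : ℝ) / 4)) := by ring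

end final
/-- Almost all generalised Petersen graphs are not Cayley graphs:
`B(N) / A(N) → 0` as `N → ∞`. -/
theorem almost_all_petersen_not_cayley :
    Filter.Tendsto (fun N : ℕ => (numCayleyGP N : ℝ) / (numGP N : ℝ))
      Filter.atTop (nhds 0) := by
  have hlim : Filter.Tendsto
      (fun N : ℕ => 48 * (Real.log N ^ 3 / (N : ℝ) ^ ((1 : ℝ) / 4)))
      Filter.atTop (nhds 0) := by
    have h0 : Filter.Tendsto (fun x : ℝ => Real.log x ^ (3 : ℕ) / x ^ ((1 : ℝ) / 4))
        Filter.atTop (nhds 0) := by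
      have h := (isLittleO_log_rpow_rpow_atTop (3 : ℝ)
        (by norm_num : (0 : ℝ) < 1 / 4)).tendsto_div_nhds_zero
      refine h.congr fun x => ?_
      rw [show ((3 : ℝ)) = ((3 : ℕ) : ℝ) by norm_num, Real.rpow_natCast]
    have h1 : Filter.Tendsto (fun N : ℕ => Real.log N ^ (3 : ℕ) / (N : ℝ) ^ ((1 : ℝ) / 4))
        Filter.atTop (nhds 0) :=
      h0.comp tendsto_natCast_atTop_atTop
    have := h1.const_mul (48 : ℝ)
    simpa using this
  refine tendsto_of_tendsto_of_tendsto_of_le_of_le' tendsto_const_nhds hlim ?_ ?_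
  · exact Filter.Eventually.of_forall fun N => by positivity
  · filter_upwards [Filter.eventually_ge_atTop (100 ^ 4)] with N hN
    exact ratio_bound hN
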